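/- For fixed t > 0, the map λ ↦ K(t,λ) = -(t + √(-λ))², defined on the open left half-plane ℂ_{--} = {x+iy : x<0} with the principal branch of the square root, is holomorphic and maps ℂ_{--} into the set {x + iy : x < -t·√(t² + 2|y|)}; in particular its image lies in ℂ_{--}. -/

import Mathlib

open Complex Set

lemma stmt16_key (t u c : ℝ) (ht : 0 < t) (hc : 0 ≤ c) (huc : t < u - c) :
    t * Real.sqrt (t ^ 2 + 2 * (2 * u * c)) < u ^ 2 - c ^ 2 := by
  have hu : 0 < u := by nlinarith
  have hs : (0:ℝ) ≤ t ^ 2 + 2 * (2 * u * c) := by positivity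
  have h1 : t ^ 2 * (t ^ 2 + 2 * (2 * u * c)) < (u ^ 2 - c ^ 2) ^ 2 := by
    have h3 : t ^ 2 < (u - c) ^ 2 := by nlinarith
    have h5 : (u - c) ^ 2 * (t ^ 2 + 2 * (2 * u * c)) <
        (u - c) ^ 2 * ((u - c) ^ 2 + 4 * u * c) := by
      apply mul_lt_mul_of_pos_left (by linarith) (by nlinarith)
    have h6 : t ^ 2 * (t ^ 2 + 2 * (2 * u * c)) ≤ (u - c) ^ 2 * (t ^ 2 + 2 * (2 * u * c)) :=
      mul_le_mul_of_nonneg_right h3.le hs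
    nlinarith [h5, h6]
  have h2 : t * Real.sqrt (t ^ 2 + 2 * (2 * u * c)) =
      Real.sqrt (t ^ 2 * (t ^ 2 + 2 * (2 * u * c))) := by
    rw [Real.sqrt_mul (by positivity), Real.sqrt_sq ht.le]
  rw [h2]
  calc Real.sqrt (t ^ 2 * (t ^ 2 + 2 * (2 * u * c))) < Real.sqrt ((u ^ 2 - c ^ 2) ^ 2) :=
        Real.sqrt_lt_sqrt (by positivity) h1
    _ = u ^ 2 - c ^ 2 := Real.sqrt_sq (by nlinarith)

/-- For fixed `t > 0`, the map `λ ↦ -(t + √(-λ))²` is holomorphic on the open left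
half-plane and maps it into `{x + iy : x < -t √(t² + 2|y|)}`. -/
theorem stmt16 (t : ℝ) (ht : 0 < t) :
    DifferentiableOn ℂ (fun l : ℂ => -(t + (-l) ^ (1 / 2 : ℂ)) ^ 2) {l : ℂ | l.re < 0} ∧
      ∀ l : ℂ, l.re < 0 →
        (-(t + (-l) ^ (1 / 2 : ℂ)) ^ 2).re <
          -t * Real.sqrt (t ^ 2 + 2 * |(-(t + (-l) ^ (1 / 2 : ℂ)) ^ 2).im|) := by
  constructor
  · intro l hl
    have hmem : -l ∈ slitPlane := Or.inl (by simpa using hl)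
    have hd : DifferentiableAt ℂ (fun l : ℂ => (-l) ^ (1 / 2 : ℂ)) l :=
      DifferentiableAt.cpow (differentiableAt_id.neg) (differentiableAt_const _) hmem
    exact (((hd.const_add _).pow 2).neg).differentiableWithinAt
  · intro l hl
    set w : ℂ := (-l) ^ (1 / 2 : ℂ) with hw
    have hre : (-l).re = -l.re := by simp
    have hrepos : 0 < (-l).re := by simp [hl]
    have h12 : (1 / 2 : ℂ) = (2⁻¹ : ℂ) := by norm_num
    have hwre : w.re = Real.sqrt ((‖-l‖ + (-l).re) / 2) := by
      rw [hw, h12, Complex.cpow_inv_two_re]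
    have hwim : |w.im| = Real.sqrt ((‖-l‖ - (-l).re) / 2) := by
      rw [hw, h12, Complex.abs_cpow_inv_two_im]
    have habs : (-l).re ≤ ‖-l‖ := Complex.re_le_norm _
    have hkey : |w.im| < w.re := by
      rw [hwre, hwim]
      apply Real.sqrt_lt_sqrt (by linarith)
      linarith
    set a := w.re
    set b := w.im
    have hre2 : (-(t + w) ^ 2).re = b ^ 2 - (t + a) ^ 2 := by
      simp [pow_two, Complex.mul_re]; rfl
    have him2 : (-(t + w) ^ 2).im = -(2 * (t + a) * b) := by
      simp [pow_two, Complex.mul_im]; ring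
    rw [hre2, him2]
    have hta : 0 < t + a := by
      have := abs_nonneg b; linarith
    have habsim : |(-(2 * (t + a) * b))| = 2 * (t + a) * |b| := by
      rw [abs_neg, _root_.abs_mul, _root_.abs_of_nonneg (by linarith : (0:ℝ) ≤ 2 * (t + a))]
    rw [habsim]
    have hx := stmt16_key t (t + a) |b| ht (abs_nonneg b) (by linarith)
    have hb2 : b ^ 2 = |b| ^ 2 := (_root_.sq_abs b).symm
    linarith [hx]
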